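/- The map ℝ² → χ(ℤ²) sending (x, y) to the class of the representation determined by (1,0) ↦ diag(e^{ix}, e^{−ix}) and (0,1) ↦ diag(e^{iy}, e^{−iy}) is continuous and surjective, and it induces a homeomorphism from the quotient of the torus ℝ²/(2πℤ)² by the involution induced by (x, y) ↦ (−x, −y) onto χ(ℤ²); moreover, χ(ℤ²) is homeomorphic to the 2-sphere S². -/

import Mathlib

open Matrix

noncomputable section

/-- `SU(2)`: 2×2 special unitary complex matrices. -/
abbrev SU2 : Type := Matrix.specialUnitaryGroup (Fin 2) ℂ

namespace CS

noncomputable instance : Group SU2 :=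
  { (inferInstance : Monoid SU2) with
    inv := fun A => ⟨star (A : Matrix (Fin 2) (Fin 2) ℂ), by
      rcases Submonoid.mem_inf.mp A.2 with ⟨h1, h2⟩
      refine Submonoid.mem_inf.mpr ⟨Unitary.star_mem h1, ?_⟩
      have hdet : (star (A : Matrix (Fin 2) (Fin 2) ℂ)).det = star ((A : Matrix (Fin 2) (Fin 2) ℂ).det) := by
        simp [Matrix.star_eq_conjTranspose, Matrix.det_conjTranspose]
      have h2' : (A : Matrix (Fin 2) (Fin 2) ℂ).det = 1 := h2
      have : (star (A : Matrix (Fin 2) (Fin 2) ℂ)).det = 1 := by rw [hdet, h2', star_one]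
      simpa only [MonoidHom.mem_mker, ← Matrix.coe_detMonoidHom] using this⟩
    inv_mul_cancel := fun A => Subtype.ext (Submonoid.mem_inf.mp A.2).1.1 }

/-- The topology of pointwise convergence on the space of representations. -/
instance repTop (G : Type*) [Group G] : TopologicalSpace (G →* SU2) :=
  TopologicalSpace.induced (fun ρ => (ρ : G → SU2)) inferInstance

/-- Conjugation equivalence of representations. -/
def conjSetoid (G : Type*) [Group G] : Setoid (G →* SU2) where
  r ρ σ := ∃ u : SU2, ∀ g, σ g = u * ρ g * u⁻¹
  iseqv := by
    refine ⟨fun ρ => ⟨1, by simp⟩, ?_, ?_⟩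
    · rintro ρ σ ⟨u, h⟩
      exact ⟨u⁻¹, fun g => by rw [h g]; group⟩
    · rintro ρ σ τ ⟨u, h⟩ ⟨v, h'⟩
      exact ⟨v * u, fun g => by rw [h' g, h g]; group⟩

/-- The `SU(2)` character variety of a group `G`. -/
abbrev CharVar (G : Type*) [Group G] : Type _ := Quotient (conjSetoid G)

/-- The conjugacy class of a representation. -/
abbrev charCl {G : Type*} [Group G] (ρ : G →* SU2) : CharVar G :=
  Quotient.mk (conjSetoid G) ρ

/-- A representation is abelian if its image is abelian. -/
def IsAbelianRep {G : Type*} [Group G] (ρ : G →* SU2) : Prop :=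
  ∀ g h : G, Commute (ρ g) (ρ h)

/-- A representation is irreducible if its image is a non-abelian subgroup of `SU(2)`. -/
def IsIrrep {G : Type*} [Group G] (ρ : G →* SU2) : Prop :=
  ¬ IsAbelianRep ρ

/-- The irreducible part `χ*(G)` of the character variety. -/
abbrev CharVarIrr (G : Type*) [Group G] : Type _ :=
  {c : CharVar G // ∃ ρ : G →* SU2, IsIrrep ρ ∧ c = charCl ρ}

end CS
namespace CS

/-- `su(2)`: trace-zero skew-adjoint 2×2 complex matrices, as a real vector space. -/
def su2 : Submodule ℝ (Matrix (Fin 2) (Fin 2) ℂ) where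
  carrier := {A | Aᴴ = -A ∧ A.trace = 0}
  add_mem' := by
    rintro A B ⟨hA1, hA2⟩ ⟨hB1, hB2⟩
    refine ⟨?_, ?_⟩
    · rw [Matrix.conjTranspose_add, hA1, hB1, neg_add]
    · rw [Matrix.trace_add, hA2, hB2, add_zero]
  zero_mem' := by
    constructor <;> simp
  smul_mem' := by
    rintro c A ⟨hA1, hA2⟩
    refine ⟨?_, ?_⟩
    · rw [Matrix.conjTranspose_smul, hA1, smul_neg, star_trivial]
    · rw [Matrix.trace_smul, hA2, smul_zero]

variable {G : Type*} [Group G]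

/-- The adjoint action of a representation on 2×2 matrices: `g · v = ρ(g) v ρ(g)⁻¹`. -/
def adAct (ρ : G →* SU2) (g : G) (A : Matrix (Fin 2) (Fin 2) ℂ) : Matrix (Fin 2) (Fin 2) ℂ :=
  (ρ g : Matrix (Fin 2) (Fin 2) ℂ) * A * ((ρ g⁻¹ : SU2) : Matrix (Fin 2) (Fin 2) ℂ)

lemma adAct_add (ρ : G →* SU2) (g : G) (A B : Matrix (Fin 2) (Fin 2) ℂ) :
    adAct ρ g (A + B) = adAct ρ g A + adAct ρ g B := by
  simp [adAct, Matrix.add_mul, Matrix.mul_add]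

lemma adAct_smul (ρ : G →* SU2) (g : G) (c : ℝ) (A : Matrix (Fin 2) (Fin 2) ℂ) :
    adAct ρ g (c • A) = c • adAct ρ g A := by
  simp [adAct, Matrix.smul_mul, Matrix.mul_smul]

/-- The space of 1-cocycles of `G` with coefficients in `su(2)` twisted by `ad ρ`. -/
def oneCocyclesAd (ρ : G →* SU2) : Submodule ℝ (G → Matrix (Fin 2) (Fin 2) ℂ) where
  carrier := {f | (∀ g, f g ∈ su2) ∧ ∀ g h, f (g * h) = f g + adAct ρ g (f h)}
  add_mem' := by
    rintro f f' ⟨hf1, hf2⟩ ⟨hf'1, hf'2⟩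
    refine ⟨fun g => su2.add_mem (hf1 g) (hf'1 g), fun g h => ?_⟩
    simp only [Pi.add_apply, hf2 g h, hf'2 g h, adAct_add]
    abel
  zero_mem' := by
    refine ⟨fun g => su2.zero_mem, fun g h => ?_⟩
    simp [adAct]
  smul_mem' := by
    rintro c f ⟨hf1, hf2⟩
    refine ⟨fun g => su2.smul_mem c (hf1 g), fun g h => ?_⟩
    simp only [Pi.smul_apply, hf2 g h, adAct_smul, smul_add]

/-- The space of 1-coboundaries of `G` with coefficients in `su(2)` twisted by `ad ρ`. -/
def oneCoboundariesAd (ρ : G →* SU2) : Submodule ℝ (G → Matrix (Fin 2) (Fin 2) ℂ) where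
  carrier := {f | ∃ A ∈ su2, ∀ g, f g = adAct ρ g A - A}
  add_mem' := by
    rintro f f' ⟨A, hA, hf⟩ ⟨B, hB, hf'⟩
    refine ⟨A + B, su2.add_mem hA hB, fun g => ?_⟩
    simp only [Pi.add_apply, hf g, hf' g, adAct_add]
    abel
  zero_mem' := ⟨0, su2.zero_mem, fun g => by simp [adAct]⟩
  smul_mem' := by
    rintro c f ⟨A, hA, hf⟩
    refine ⟨c • A, su2.smul_mem c hA, fun g => ?_⟩
    simp only [Pi.smul_apply, hf g, adAct_smul, smul_sub]

/-- First group cohomology `H¹(G; su(2)_{ad ρ})`, as a real vector space. -/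
def H1Ad (ρ : G →* SU2) : Type _ :=
  ↥(oneCocyclesAd ρ) ⧸ ((oneCoboundariesAd ρ).comap (oneCocyclesAd ρ).subtype)

noncomputable instance (ρ : G →* SU2) : AddCommGroup (H1Ad ρ) :=
  inferInstanceAs (AddCommGroup (↥(oneCocyclesAd ρ) ⧸ ((oneCoboundariesAd ρ).comap (oneCocyclesAd ρ).subtype)))

noncomputable instance (ρ : G →* SU2) : Module ℝ (H1Ad ρ) :=
  inferInstanceAs (Module ℝ (↥(oneCocyclesAd ρ) ⧸ ((oneCoboundariesAd ρ).comap (oneCocyclesAd ρ).subtype)))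

/-- The dimension (rank) of `H¹(G; su(2)_{ad ρ})` over `ℝ`. -/
noncomputable def h1dim (ρ : G →* SU2) : Cardinal := Module.rank ℝ (H1Ad ρ)

end CS
namespace CS

/-- The relator set of the torus knot group `⟨x, y | xᵖ = y^q⟩`. -/
def tkRel (p q : ℤ) : Set (FreeGroup (Fin 2)) :=
  {FreeGroup.of 0 ^ p * FreeGroup.of 1 ^ (-q)}

/-- The `(p,q)` torus knot group `G_{p,q} = ⟨x, y | xᵖ y^{-q}⟩`. -/
abbrev TK (p q : ℤ) : Type := PresentedGroup (tkRel p q)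

/-- The generator `x` of `G_{p,q}`. -/
def tkx (p q : ℤ) : TK p q := PresentedGroup.of 0

/-- The generator `y` of `G_{p,q}`. -/
def tky (p q : ℤ) : TK p q := PresentedGroup.of 1

/-- The meridian `μ = xᵃ yᵇ` of `G_{p,q}`. -/
def tkMu (p q a b : ℤ) : TK p q := tkx p q ^ a * tky p q ^ b

/-- The longitude `λ = xᵖ μ^{-pq}` of `G_{p,q}`. -/
def tkLam (p q a b : ℤ) : TK p q := tkx p q ^ p * tkMu p q a b ^ (-(p * q))

lemma tk_rel_holds (p q : ℤ) : tkx p q ^ p = tky p q ^ q := by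
  have hmem : FreeGroup.of (0 : Fin 2) ^ p * FreeGroup.of (1 : Fin 2) ^ (-q) ∈
      Subgroup.normalClosure (tkRel p q) :=
    Subgroup.subset_normalClosure rfl
  have h1 : PresentedGroup.mk (tkRel p q) (FreeGroup.of 0 ^ p * FreeGroup.of 1 ^ (-q)) = 1 :=
    (QuotientGroup.eq_one_iff _).mpr hmem
  have h2 : tkx p q ^ p * tky p q ^ (-q) = 1 := by
    have := h1
    rw [_root_.map_mul, map_zpow, map_zpow] at this
    exact this
  rw [_root_.zpow_neg] at h2
  exact (mul_inv_eq_one.mp h2)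

lemma tk_xp_central (p q : ℤ) (w : TK p q) : Commute (tkx p q ^ p) w := by
  have hw : w ∈ Subgroup.closure (Set.range (PresentedGroup.of : Fin 2 → TK p q)) := by
    rw [PresentedGroup.closure_range_of]; trivial
  induction hw using Subgroup.closure_induction with
  | mem z hz =>
      obtain ⟨i, rfl⟩ := hz
      fin_cases i
      · exact (Commute.refl (tkx p q)).zpow_left p
      · rw [tk_rel_holds p q]
        exact (Commute.refl (tky p q)).zpow_left q
  | one => exact Commute.one_right _
  | mul a b _ _ ha hb => exact ha.mul_right hb
  | inv a _ ha => exact ha.inv_right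

lemma tk_mu_lam_comm (p q a b : ℤ) : Commute (tkMu p q a b) (tkLam p q a b) := by
  unfold tkLam
  exact (tk_xp_central p q (tkMu p q a b)).symm.mul_right
    ((Commute.refl (tkMu p q a b)).zpow_right (-(p * q)))

end CS
namespace CS

/-- The free abelian group of rank 2, written multiplicatively. -/
abbrev Z2 : Type := Multiplicative (ℤ × ℤ)

/-- The homomorphism `ℤ² → G` sending the generators to a pair of commuting elements. -/
def zsqHom {G : Type*} [Group G] (u v : G) (huv : Commute u v) : Z2 →* G where
  toFun z := u ^ (Multiplicative.toAdd z).1 * v ^ (Multiplicative.toAdd z).2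
  map_one' := by simp
  map_mul' z w := by
    have h := (huv.zpow_zpow (Multiplicative.toAdd w).1 (Multiplicative.toAdd z).2).eq
    simp only [toAdd_mul, Prod.fst_add, Prod.snd_add, _root_.zpow_add]
    calc u ^ (Multiplicative.toAdd z).1 * u ^ (Multiplicative.toAdd w).1 *
          (v ^ (Multiplicative.toAdd z).2 * v ^ (Multiplicative.toAdd w).2)
        = u ^ (Multiplicative.toAdd z).1 *
            (u ^ (Multiplicative.toAdd w).1 * v ^ (Multiplicative.toAdd z).2) *
            v ^ (Multiplicative.toAdd w).2 := by group
      _ = u ^ (Multiplicative.toAdd z).1 *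
            (v ^ (Multiplicative.toAdd z).2 * u ^ (Multiplicative.toAdd w).1) *
            v ^ (Multiplicative.toAdd w).2 := by rw [h]
      _ = u ^ (Multiplicative.toAdd z).1 * v ^ (Multiplicative.toAdd z).2 *
            (u ^ (Multiplicative.toAdd w).1 * v ^ (Multiplicative.toAdd w).2) := by group

section Amalg

variable {A G H : Type*} [Group A] [Group G] [Group H]

/-- The normal subgroup of the free product generated by the amalgamation relations. -/
def amalgRel (φ : A →* G) (ψ : A →* H) : Subgroup (Monoid.Coprod G H) :=
  Subgroup.normalClosure (Set.range fun a => Monoid.Coprod.inl (φ a) * (Monoid.Coprod.inr (ψ a))⁻¹)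

instance amalgRel_normal (φ : A →* G) (ψ : A →* H) : (amalgRel φ ψ).Normal :=
  Subgroup.normalClosure_normal

/-- The pushout (amalgamated free product) of `φ : A → G` and `ψ : A → H`. -/
abbrev Amalg (φ : A →* G) (ψ : A →* H) : Type _ :=
  Monoid.Coprod G H ⧸ amalgRel φ ψ

/-- The canonical map `G → G *_A H`. -/
def Amalg.inl (φ : A →* G) (ψ : A →* H) : G →* Amalg φ ψ :=
  (QuotientGroup.mk' (amalgRel φ ψ)).comp Monoid.Coprod.inl

/-- The canonical map `H → G *_A H`. -/
def Amalg.inr (φ : A →* G) (ψ : A →* H) : H →* Amalg φ ψ :=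
  (QuotientGroup.mk' (amalgRel φ ψ)).comp Monoid.Coprod.inr

lemma amalg_comm (φ : A →* G) (ψ : A →* H) (a : A) :
    Amalg.inl φ ψ (φ a) = Amalg.inr φ ψ (ψ a) := by
  have hgen : Monoid.Coprod.inl (φ a) * (Monoid.Coprod.inr (ψ a))⁻¹ ∈ amalgRel φ ψ :=
    Subgroup.subset_normalClosure ⟨a, rfl⟩
  have hinv : (Monoid.Coprod.inr (ψ a) : Monoid.Coprod G H) * (Monoid.Coprod.inl (φ a))⁻¹ ∈
      amalgRel φ ψ := by
    have := (amalgRel φ ψ).inv_mem hgen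
    simpa [_root_.mul_inv_rev] using this
  have hkey : ((Monoid.Coprod.inl (φ a) : Monoid.Coprod G H))⁻¹ * Monoid.Coprod.inr (ψ a) ∈
      amalgRel φ ψ := (amalgRel_normal φ ψ).mem_comm hinv
  exact (QuotientGroup.eq (s := amalgRel φ ψ)).mpr hkey

end Amalg

/-! Specific meridians and longitudes. -/

/-- Meridian of `T(3,5)`. -/
def mu35 : TK 3 5 := tkMu 3 5 2 (-3)
/-- Longitude of `T(3,5)`. -/
def lam35 : TK 3 5 := tkLam 3 5 2 (-3)
/-- Meridian of `T(2,7)`. -/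
def mu27 : TK 2 7 := tkMu 2 7 1 (-3)
/-- Longitude of `T(2,7)`. -/
def lam27 : TK 2 7 := tkLam 2 7 1 (-3)
/-- Meridian of `T(-2,7)`. -/
def muN27 : TK (-2) 7 := tkMu (-2) 7 1 3
/-- Longitude of `T(-2,7)`. -/
def lamN27 : TK (-2) 7 := tkLam (-2) 7 1 3

/-- `φ_X : ℤ² → G_{3,5}`, `(m,n) ↦ μ_X^m λ_X^n`. -/
def phiX : Z2 →* TK 3 5 := zsqHom mu35 lam35 (tk_mu_lam_comm 3 5 2 (-3))

lemma mu_mulLam_comm {Γ : Type*} [Group Γ] {μ ℓ : Γ} (h : Commute μ ℓ) :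
    Commute μ ((μ * ℓ)⁻¹) :=
  ((Commute.refl μ).mul_right h).inv_right

/-- `φ_Y : ℤ² → G_{2,7}`, `(m,n) ↦ μ_Y^m (μ_Y λ_Y)^{-n}`. -/
def phiY : Z2 →* TK 2 7 :=
  zsqHom mu27 ((mu27 * lam27)⁻¹) (mu_mulLam_comm (tk_mu_lam_comm 2 7 1 (-3)))

/-- `π₁(Σ₁)`, the pushout of `φ_X` and `φ_Y`. -/
abbrev Pi1Sigma1 : Type _ := Amalg phiX phiY

/-- `π₁(Z)`, the group of the complement of `T(-2,7) # T(-2,7)`: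
the pushout of the two meridian inclusions `ℤ → G_{-2,7}`. -/
abbrev Pi1Z : Type _ :=
  Amalg (zpowersHom (TK (-2) 7) muN27) (zpowersHom (TK (-2) 7) muN27)

/-- The meridian of `Z`. -/
def muZ : Pi1Z := Amalg.inl _ _ muN27

/-- The longitude of `Z`: the product of the images of the two longitudes. -/
def lamZ : Pi1Z := Amalg.inl _ _ lamN27 * Amalg.inr _ _ lamN27

lemma muZ_eq_inr : muZ = Amalg.inr (zpowersHom (TK (-2) 7) muN27) (zpowersHom (TK (-2) 7) muN27) muN27 := by
  have := amalg_comm (zpowersHom (TK (-2) 7) muN27) (zpowersHom (TK (-2) 7) muN27)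
    (Multiplicative.ofAdd 1)
  simpa [muZ] using this

lemma muZ_lamZ_comm : Commute muZ lamZ := by
  have h1 : Commute muZ (Amalg.inl (zpowersHom (TK (-2) 7) muN27) (zpowersHom (TK (-2) 7) muN27) lamN27) :=
    (tk_mu_lam_comm (-2) 7 1 3).map _
  have h2 : Commute muZ (Amalg.inr (zpowersHom (TK (-2) 7) muN27) (zpowersHom (TK (-2) 7) muN27) lamN27) := by
    rw [muZ_eq_inr]
    exact (tk_mu_lam_comm (-2) 7 1 3).map _
  exact h1.mul_right h2

/-- `ψ_X : ℤ² → G_{3,5}` (same formula as `φ_X`). -/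
def psiX : Z2 →* TK 3 5 := phiX

/-- `ψ_Z : ℤ² → π₁(Z)`, `(m,n) ↦ μ_Z^m (μ_Z λ_Z)^{-n}`. -/
def psiZ : Z2 →* Pi1Z := zsqHom muZ ((muZ * lamZ)⁻¹) (mu_mulLam_comm muZ_lamZ_comm)

/-- `π₁(Σ₂)`, the pushout of `ψ_X` and `ψ_Z`. -/
abbrev Pi1Sigma2 : Type _ := Amalg psiX psiZ

end CS
namespace CS

/-- The diagonal matrix `diag(e^{it}, e^{-it})`. -/
def diagU (t : ℝ) : Matrix (Fin 2) (Fin 2) ℂ :=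
  Matrix.diagonal ![Complex.exp ((t : ℂ) * Complex.I), Complex.exp (-(t : ℂ) * Complex.I)]

lemma star_exp_I (s : ℝ) :
    star (Complex.exp ((s : ℂ) * Complex.I)) = Complex.exp (-(s : ℂ) * Complex.I) :=
  calc star (Complex.exp ((s : ℂ) * Complex.I))
      = (starRingEnd ℂ) (Complex.exp ((s : ℂ) * Complex.I)) := rfl
    _ = Complex.exp ((starRingEnd ℂ) ((s : ℂ) * Complex.I)) := (Complex.exp_conj _).symm
    _ = Complex.exp (-(s : ℂ) * Complex.I) := by
        rw [_root_.map_mul, Complex.conj_I, Complex.conj_ofReal, mul_neg, ← neg_mul]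

lemma exp_I_mul_exp_neg_I (s : ℝ) :
    Complex.exp ((s : ℂ) * Complex.I) * Complex.exp (-(s : ℂ) * Complex.I) = 1 := by
  rw [← Complex.exp_add, show (s : ℂ) * Complex.I + -(s : ℂ) * Complex.I = 0 by ring,
    Complex.exp_zero]

lemma diagU_mul (s u : ℝ) : diagU s * diagU u = diagU (s + u) := by
  unfold diagU
  rw [Matrix.diagonal_mul_diagonal, Matrix.diagonal_eq_diagonal_iff]
  intro i
  fin_cases i
  · show Complex.exp _ * Complex.exp _ = Complex.exp _
    rw [← Complex.exp_add]; congr 1; push_cast; ring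
  · show Complex.exp _ * Complex.exp _ = Complex.exp _
    rw [← Complex.exp_add]; congr 1; push_cast; ring

lemma diagU_zero : diagU 0 = 1 := by
  unfold diagU
  rw [show (![Complex.exp (((0:ℝ) : ℂ) * Complex.I), Complex.exp (-((0:ℝ) : ℂ) * Complex.I)] :
      Fin 2 → ℂ) = fun _ => 1 by funext i; fin_cases i <;> simp]
  exact Matrix.diagonal_one

lemma star_diagU (t : ℝ) : star (diagU t) = diagU (-t) := by
  unfold diagU
  rw [Matrix.star_eq_conjTranspose, Matrix.diagonal_conjTranspose,
    Matrix.diagonal_eq_diagonal_iff]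
  intro i
  fin_cases i
  · show star (Complex.exp ((t : ℂ) * Complex.I)) = Complex.exp (((-t : ℝ) : ℂ) * Complex.I)
    rw [star_exp_I t]; push_cast; ring_nf
  · show star (Complex.exp (-(t : ℂ) * Complex.I)) = Complex.exp (-((-t : ℝ) : ℂ) * Complex.I)
    rw [show -(t : ℂ) * Complex.I = ((-t : ℝ) : ℂ) * Complex.I by push_cast; ring,
      star_exp_I (-t)]

lemma diagU_mem (t : ℝ) : diagU t ∈ Matrix.specialUnitaryGroup (Fin 2) ℂ := by
  refine Submonoid.mem_inf.mpr ⟨⟨?_, ?_⟩, ?_⟩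
  · rw [star_diagU, diagU_mul, neg_add_cancel, diagU_zero]
  · rw [star_diagU, diagU_mul, add_neg_cancel, diagU_zero]
  · have : (diagU t).det = 1 := by
      unfold diagU
      rw [Matrix.det_diagonal, Fin.prod_univ_two]
      simpa using exp_I_mul_exp_neg_I t
    simpa only [MonoidHom.mem_mker, ← Matrix.coe_detMonoidHom] using this

/-- The element `diag(e^{it}, e^{-it})` of `SU(2)`. -/
def diagSU (t : ℝ) : SU2 := ⟨diagU t, diagU_mem t⟩

lemma diagSU_comm (s t : ℝ) : Commute (diagSU s) (diagSU t) := by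
  apply Subtype.ext
  show diagU s * diagU t = diagU t * diagU s
  rw [diagU_mul, diagU_mul, add_comm]

end CS
namespace CS

/-- The setoid on `A × [0,1)` collapsing `A × {0}` to a point. -/
def coneSetoid (A : Type*) : Setoid (A × (Set.Ico (0:ℝ) 1)) where
  r p q := p = q ∨ (((p.2 : ℝ) = 0) ∧ ((q.2 : ℝ) = 0))
  iseqv := by
    constructor
    · intro p; exact Or.inl rfl
    · rintro p q (rfl | ⟨h1, h2⟩)
      · exact Or.inl rfl
      · exact Or.inr ⟨h2, h1⟩
    · rintro p q r (rfl | ⟨h1, h2⟩) h'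
      · exact h'
      · rcases h' with rfl | ⟨h3, h4⟩
        · exact Or.inr ⟨h1, h2⟩
        · exact Or.inr ⟨h1, h4⟩

/-- The open cone on a space `A`: `(A × [0,1)) / (A × {0})`. -/
abbrev OpenCone (A : Type*) [TopologicalSpace A] : Type _ := Quotient (coneSetoid A)

/-- The setoid on `X ⊕ Y` identifying the two base points `x₀` and `y₀`. -/
def wedgeSetoid (X Y : Type*) (x0 : X) (y0 : Y) : Setoid (X ⊕ Y) where
  r p q := p = q ∨ ((p = Sum.inl x0 ∨ p = Sum.inr y0) ∧ (q = Sum.inl x0 ∨ q = Sum.inr y0))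
  iseqv := by
    constructor
    · intro p; exact Or.inl rfl
    · rintro p q (rfl | ⟨h1, h2⟩)
      · exact Or.inl rfl
      · exact Or.inr ⟨h2, h1⟩
    · rintro p q r (rfl | ⟨h1, h2⟩) h'
      · exact h'
      · rcases h' with rfl | ⟨h3, h4⟩
        · exact Or.inr ⟨h1, h2⟩
        · exact Or.inr ⟨h1, h4⟩

/-- The one-point union (wedge) of `X` and `Y` at the base points `x₀`, `y₀`. -/
abbrev Wedge (X Y : Type*) [TopologicalSpace X] [TopologicalSpace Y] (x0 : X) (y0 : Y) :
    Type _ := Quotient (wedgeSetoid X Y x0 y0)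

/-- The 2-sphere. -/
abbrev Sphere2 : Type _ := Metric.sphere (0 : EuclideanSpace ℝ (Fin 3)) 1

/-- The 3-torus. -/
abbrev Torus3 : Type _ := Circle × Circle × Circle

end CS

namespace CS

/-- The representation `ℤ² → SU(2)` with `(1,0) ↦ diag(e^{ix}, e^{-ix})`,
`(0,1) ↦ diag(e^{iy}, e^{-iy})`. -/
def pillRep (p : ℝ × ℝ) : Z2 →* SU2 :=
  zsqHom (diagSU p.1) (diagSU p.2) (diagSU_comm p.1 p.2)

/-- The orbit equivalence relation on `ℝ²` of the group generated by the translation lattice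
`(2πℤ)²` and the involution `(x,y) ↦ (-x,-y)`; the quotient is the quotient of the torus
`ℝ²/(2πℤ)²` by the induced involution. -/
def pillowSetoid : Setoid (ℝ × ℝ) where
  r p q := ∃ m n : ℤ,
    (q.1 = p.1 + 2 * Real.pi * m ∧ q.2 = p.2 + 2 * Real.pi * n) ∨
    (q.1 = -p.1 + 2 * Real.pi * m ∧ q.2 = -p.2 + 2 * Real.pi * n)
  iseqv := by
    constructor
    · intro p
      exact ⟨0, 0, Or.inl ⟨by norm_num, by norm_num⟩⟩
    · rintro p q ⟨m, n, (⟨h1, h2⟩ | ⟨h1, h2⟩)⟩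
      · exact ⟨-m, -n, Or.inl ⟨by push_cast; linarith, by push_cast; linarith⟩⟩
      · exact ⟨m, n, Or.inr ⟨by linarith, by linarith⟩⟩
    · rintro p q s ⟨m, n, (⟨h1, h2⟩ | ⟨h1, h2⟩)⟩ ⟨m', n', (⟨h1', h2'⟩ | ⟨h1', h2'⟩)⟩
      · exact ⟨m + m', n + n', Or.inl ⟨by push_cast; linarith, by push_cast; linarith⟩⟩
      · exact ⟨m' - m, n' - n, Or.inr ⟨by push_cast; linarith, by push_cast; linarith⟩⟩
      · exact ⟨m + m', n + n', Or.inr ⟨by push_cast; linarith, by push_cast; linarith⟩⟩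
      · exact ⟨m' - m, n' - n, Or.inl ⟨by push_cast; linarith, by push_cast; linarith⟩⟩

end CS

namespace CS

local notation "M2" => Matrix (Fin 2) (Fin 2) ℂ

/-! ### SU(2) basics -/

lemma inv_coe (A : SU2) : ((A⁻¹ : SU2) : M2) = star (A : M2) := rfl
lemma mul_coe (A B : SU2) : ((A * B : SU2) : M2) = (A : M2) * B := rfl
lemma star_mul_self_coe (A : SU2) : star (A : M2) * A = 1 := (Submonoid.mem_inf.mp A.2).1.1
lemma mul_star_self_coe (A : SU2) : (A : M2) * star (A : M2) = 1 := (Submonoid.mem_inf.mp A.2).1.2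
lemma det_coe (A : SU2) : (A : M2).det = 1 := (Submonoid.mem_inf.mp A.2).2

lemma mem_SU2 {B : M2} (h1 : star B * B = 1) (h2 : B.det = 1) :
    B ∈ Matrix.specialUnitaryGroup (Fin 2) ℂ := by
  refine Submonoid.mem_inf.mpr ⟨⟨h1, mul_eq_one_comm.mp h1⟩, ?_⟩
  simpa only [MonoidHom.mem_mker, ← Matrix.coe_detMonoidHom] using h2

lemma star_eq_adjugate (A : SU2) : star (A : M2) = (A : M2).adjugate := by
  have h1 := Matrix.adjugate_mul (A : M2)
  rw [det_coe, one_smul] at h1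
  calc star (A : M2)
      = ((A : M2).adjugate * A) * star (A : M2) := by rw [h1, one_mul]
    _ = (A : M2).adjugate := by rw [Matrix.mul_assoc, mul_star_self_coe, Matrix.mul_one]

lemma entry10 (A : SU2) : (A : M2) 1 0 = -star ((A : M2) 0 1) := by
  have h : star ((A : M2) 1 0) = -((A : M2) 0 1) := by
    have := congrFun (congrFun (star_eq_adjugate A) 0) 1
    simpa [Matrix.star_apply, Matrix.adjugate_fin_two] using this
  have := congrArg star h
  simpa using this

lemma entry11 (A : SU2) : (A : M2) 1 1 = star ((A : M2) 0 0) := by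
  have := congrFun (congrFun (star_eq_adjugate A) 0) 0
  simpa [Matrix.star_apply, Matrix.adjugate_fin_two] using this.symm

lemma abs_sq (A : SU2) :
    (A : M2) 0 0 * star ((A : M2) 0 0) + (A : M2) 0 1 * star ((A : M2) 0 1) = 1 := by
  have h := det_coe A
  rw [Matrix.det_fin_two, entry10, entry11] at h
  linear_combination h

lemma mem_SU2_mk (a b : ℂ) (h : a * star a + b * star b = 1) :
    !![a, -star b; b, star a] ∈ Matrix.specialUnitaryGroup (Fin 2) ℂ := by
  simp only [Complex.star_def] at h ⊢
  apply mem_SU2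
  · ext i j
    simp only [Matrix.star_eq_conjTranspose, Matrix.mul_apply, Fin.sum_univ_two,
      Matrix.conjTranspose_apply]
    fin_cases i <;> fin_cases j <;>
      simp [Matrix.one_apply, Complex.star_def, map_neg] <;> ring_nf <;>
        linear_combination h
  · rw [Matrix.det_fin_two_of]
    linear_combination h

/-! ### diag lemmas -/

lemma diagU_apply00 (t : ℝ) : diagU t 0 0 = Complex.exp (t * Complex.I) := rfl
lemma diagU_apply11 (t : ℝ) : diagU t 1 1 = Complex.exp (-t * Complex.I) := rfl

lemma diagSU_coe (t : ℝ) : ((diagSU t : SU2) : M2) = diagU t := rfl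

lemma diagSU_mul (s t : ℝ) : diagSU s * diagSU t = diagSU (s + t) :=
  Subtype.ext (diagU_mul s t)

lemma diagSU_zero : diagSU 0 = 1 := Subtype.ext diagU_zero

/-- `diagSU` as a monoid hom from `Multiplicative ℝ`. -/
def diagHom : Multiplicative ℝ →* SU2 where
  toFun t := diagSU (Multiplicative.toAdd t)
  map_one' := diagSU_zero
  map_mul' s t := (diagSU_mul _ _).symm

lemma diagSU_zpow (t : ℝ) (m : ℤ) : diagSU t ^ m = diagSU (m * t) := by
  have : diagSU t = diagHom (Multiplicative.ofAdd t) := rfl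
  rw [this, ← map_zpow]
  show diagSU (Multiplicative.toAdd ((Multiplicative.ofAdd t) ^ m)) = _
  rw [toAdd_zpow]
  norm_num

lemma eq_diagSU_of_offdiag_zero (A : SU2) (h : (A : M2) 0 1 = 0) : ∃ x : ℝ, A = diagSU x := by
  set α := (A : M2) 0 0 with hα
  have habs : α * star α = 1 := by have := abs_sq A; rw [← hα, h] at this; simpa using this
  have habs1 : ‖α‖ = 1 := by
    have h2 : Complex.normSq α = 1 := by
      have h3 := habs
      rw [Complex.star_def, Complex.mul_conj] at h3
      exact_mod_cast h3
    rw [Complex.norm_def, h2, Real.sqrt_one]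
  refine ⟨Complex.arg α, ?_⟩
  have hexp : Complex.exp ((Complex.arg α : ℂ) * Complex.I) = α := by
    have := Complex.norm_mul_exp_arg_mul_I α
    rwa [habs1, Complex.ofReal_one, one_mul] at this
  apply Subtype.ext
  show (A : M2) = diagU (Complex.arg α)
  ext i j
  fin_cases i <;> fin_cases j
  · show (A : M2) 0 0 = diagU (Complex.arg α) 0 0
    rw [diagU_apply00, hexp]
  · show (A : M2) 0 1 = diagU (Complex.arg α) 0 1
    rw [h]; simp [diagU]
  · show (A : M2) 1 0 = diagU (Complex.arg α) 1 0
    rw [entry10, h]; simp [diagU]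
  · show (A : M2) 1 1 = diagU (Complex.arg α) 1 1
    rw [entry11, diagU_apply11, ← star_exp_I (Complex.arg α), hexp, hα]

end CS

namespace CS
local notation "M2" => Matrix (Fin 2) (Fin 2) ℂ

lemma exists_conj_diag (A : SU2) : ∃ (W : SU2) (x : ℝ), A = W * diagSU x * W⁻¹ := by
  by_cases hβ : (A : M2) 0 1 = 0
  · obtain ⟨x, hx⟩ := eq_diagSU_of_offdiag_zero A hβ
    exact ⟨1, x, by rw [hx]; group⟩
  · set α : ℂ := (A : M2) 0 0 with hα
    set β : ℂ := (A : M2) 0 1 with hβd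
    set r : ℝ := α.re with hr
    have hcast : Complex.normSq α + Complex.normSq β = 1 := by
      have h := abs_sq A
      simp only [← hα, ← hβd, Complex.star_def] at h
      rw [Complex.mul_conj, Complex.mul_conj] at h
      exact_mod_cast h
    have hnsβ : 0 < Complex.normSq β := Complex.normSq_pos.mpr hβ
    have hr2 : r ^ 2 < 1 := by
      have := Complex.normSq_apply α
      nlinarith [sq_nonneg α.im]
    set σ : ℝ := Real.sqrt (1 - r ^ 2) with hσd
    have hσ : σ ^ 2 = 1 - r ^ 2 := Real.sq_sqrt (by nlinarith)
    have hσpos : 0 < σ := Real.sqrt_pos.mpr (by nlinarith)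
    set lam : ℂ := (r : ℂ) + (σ : ℂ) * Complex.I with hlam
    have hσc : (σ : ℂ) ^ 2 = 1 - (r : ℂ) ^ 2 := by exact_mod_cast hσ
    have hquad : lam ^ 2 + 1 = 2 * r * lam := by
      rw [hlam]; linear_combination ((σ:ℂ)^2) * Complex.I_sq - hσc
    have hstarlam : star lam = (r : ℂ) - (σ : ℂ) * Complex.I := by
      rw [hlam]
      simp [Complex.star_def, map_add, _root_.map_mul, Complex.conj_I, Complex.conj_ofReal]
      ring
    have hquadc : star lam ^ 2 + 1 = 2 * r * star lam := by
      rw [hstarlam]; linear_combination ((σ:ℂ)^2) * Complex.I_sq - hσc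
    set x : ℝ := Real.arccos r with hxd
    have hexp : Complex.exp ((x : ℂ) * Complex.I) = lam := by
      rw [Complex.exp_mul_I, hxd, hlam]
      rw [← Complex.ofReal_cos, ← Complex.ofReal_sin, Real.cos_arccos (by nlinarith) (by nlinarith),
        Real.sin_arccos]
    have hexpneg : Complex.exp (-(x : ℂ) * Complex.I) = star lam := by
      rw [← star_exp_I, hexp]
    have hsum : α + star α = 2 * r := by
      rw [Complex.star_def, Complex.add_conj, hr]; push_cast; ring
    have habs' : β * star β = 1 - α * star α := by
      have h := abs_sq A
      rw [← hα, ← hβd] at h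
      linear_combination h
    set n2 : ℝ := Complex.normSq β + Complex.normSq (lam - α) with hn2d
    have hn2pos : 0 < n2 := by
      have := Complex.normSq_nonneg (lam - α); positivity
    set n : ℝ := Real.sqrt n2 with hnd
    have hn : (n : ℝ) ^ 2 = n2 := Real.sq_sqrt hn2pos.le
    have hnpos : 0 < n := Real.sqrt_pos.mpr hn2pos
    have hnne : (n : ℂ) ≠ 0 := by exact_mod_cast hnpos.ne'
    set a0 : ℂ := β / n with ha0
    set b0 : ℂ := (lam - α) / n with hb0
    have hstar_a0 : star a0 = star β / n := by
      rw [ha0, Complex.star_def, map_div₀, Complex.conj_ofReal]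
    have hstar_b0 : star b0 = (star lam - star α) / n := by
      rw [hb0, Complex.star_def, map_div₀, Complex.conj_ofReal, map_sub]
    have hmem : !![a0, -star b0; b0, star a0] ∈ Matrix.specialUnitaryGroup (Fin 2) ℂ := by
      apply mem_SU2_mk
      rw [hstar_a0, hstar_b0, ha0, hb0, div_mul_div_comm, div_mul_div_comm]
      have hms1 : β * star β = (Complex.normSq β : ℂ) := by
        rw [Complex.star_def]; exact Complex.mul_conj β
      have hms : (lam - α) * (star lam - star α) = (Complex.normSq (lam - α) : ℂ) := by
        simp only [Complex.star_def, ← map_sub]; exact Complex.mul_conj _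
      rw [hms1, hms, ← add_div]
      have hnn : (n : ℂ) * n = (n2 : ℂ) := by
        rw [← Complex.ofReal_mul]; norm_cast; rw [← hn]; ring
      rw [hnn, ← Complex.ofReal_add]
      rw [div_eq_one_iff_eq (by exact_mod_cast hn2pos.ne')]
    set W : SU2 := ⟨!![a0, -star b0; b0, star a0], hmem⟩ with hW
    have hAW : (A : M2) * (W : M2) = (W : M2) * diagU x := by
      ext i j
      rw [Matrix.mul_apply, Fin.sum_univ_two]
      have hd : diagU x = Matrix.diagonal ![lam, star lam] := by
        rw [diagU, hexp, hexpneg]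
      rw [hd, Matrix.mul_diagonal]
      fin_cases i <;> fin_cases j <;>
        simp only [hW, Matrix.cons_val', Matrix.cons_val_zero, Matrix.cons_val_one,
          Matrix.head_cons, Matrix.empty_val', Matrix.cons_val_fin_one, Matrix.head_fin_const,
          Matrix.cons_val_fin_one]
      · -- (0,0)
        show α * a0 + β * b0 = a0 * lam
        rw [ha0, hb0]; ring
      · -- (0,1)
        show α * (-star b0) + β * star a0 = -star b0 * star lam
        rw [hstar_a0, hstar_b0]
        simp only [Complex.star_def] at habs' hquadc hsum ⊢
        linear_combination ((n:ℂ)⁻¹) * habs' + ((n:ℂ)⁻¹) * hquadc -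
          ((starRingEnd ℂ) lam * (n:ℂ)⁻¹) * hsum
      · -- (1,0)
        show (A : M2) 1 0 * a0 + (A : M2) 1 1 * b0 = b0 * lam
        rw [entry10 A, entry11 A, ← hβd, ← hα, ha0, hb0]
        simp only [Complex.star_def] at habs' hquad hsum ⊢
        linear_combination (-(n:ℂ)⁻¹) * habs' - ((n:ℂ)⁻¹) * hquad + (lam * (n:ℂ)⁻¹) * hsum
      · -- (1,1)
        show (A : M2) 1 0 * (-star b0) + (A : M2) 1 1 * star a0 = star a0 * star lam
        rw [entry10 A, entry11 A, ← hβd, ← hα, hstar_a0, hstar_b0]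
        simp only [Complex.star_def]
        ring
    have key : A * W = W * diagSU x := Subtype.ext hAW
    exact ⟨W, x, by rw [← key, mul_assoc, mul_inv_cancel, mul_one]⟩

lemma diag_central {x : ℝ}
    (hs : Complex.exp ((x : ℂ) * Complex.I) = Complex.exp (-(x : ℂ) * Complex.I)) (V : SU2) :
    V * diagSU x * V⁻¹ = diagSU x := by
  apply Subtype.ext
  show (V : M2) * diagU x * star (V : M2) = diagU x
  have hd : diagU x = Complex.exp ((x : ℂ) * Complex.I) • (1 : M2) := by
    rw [diagU, ← hs]
    ext i j
    fin_cases i <;> fin_cases j <;> simp [Matrix.diagonal_apply, Matrix.one_apply]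
  rw [hd, Matrix.mul_smul, Matrix.smul_mul, Matrix.mul_one, mul_star_self_coe]

lemma exists_conj_diag_pair (A B : SU2) (h : A * B = B * A) :
    ∃ (W : SU2) (x y : ℝ), A = W * diagSU x * W⁻¹ ∧ B = W * diagSU y * W⁻¹ := by
  obtain ⟨W, x, hA⟩ := exists_conj_diag A
  by_cases hs : Complex.exp ((x : ℂ) * Complex.I) = Complex.exp (-(x : ℂ) * Complex.I)
  · obtain ⟨W', y, hB⟩ := exists_conj_diag B
    refine ⟨W', x, y, ?_, hB⟩
    rw [hA, diag_central hs W]; exact (diag_central hs W').symm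
  · set B' : SU2 := W⁻¹ * B * W with hB'
    have hcomm : diagSU x * B' = B' * diagSU x := by
      have hD : diagSU x = W⁻¹ * A * W := by
        rw [hA]; group
      rw [hB', hD]
      calc W⁻¹ * A * W * (W⁻¹ * B * W) = W⁻¹ * (A * B) * W := by group
        _ = W⁻¹ * (B * A) * W := by rw [h]
        _ = W⁻¹ * B * W * (W⁻¹ * A * W) := by group
    have hoff : (B' : M2) 0 1 = 0 := by
      have hm : diagU x * (B' : M2) = (B' : M2) * diagU x := by
        have := congrArg (Subtype.val) hcomm
        exact this
      have h01 := congrFun (congrFun hm 0) 1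
      rw [Matrix.mul_apply, Fin.sum_univ_two, Matrix.mul_apply, Fin.sum_univ_two] at h01
      have hd0 : diagU x 0 0 = Complex.exp ((x : ℂ) * Complex.I) := rfl
      have hd1 : diagU x 1 1 = Complex.exp (-(x : ℂ) * Complex.I) := rfl
      have hd01 : diagU x 0 1 = 0 := by simp [diagU]
      have hd10 : diagU x 1 0 = 0 := by simp [diagU]
      rw [hd0, hd01, hd1] at h01
      have : (B' : M2) 0 1 * (Complex.exp ((x : ℂ) * Complex.I) -
          Complex.exp (-(x : ℂ) * Complex.I)) = 0 := by linear_combination h01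
      rcases mul_eq_zero.mp this with h' | h'
      · exact h'
      · exact absurd (sub_eq_zero.mp h') hs
    obtain ⟨y, hy⟩ := eq_diagSU_of_offdiag_zero B' hoff
    refine ⟨W, x, y, hA, ?_⟩
    rw [← hy, hB']; group
end CS

namespace CS
local notation "M2" => Matrix (Fin 2) (Fin 2) ℂ

/-! ### Z2 generators and representation formulas -/

def zg1 : Z2 := Multiplicative.ofAdd (1, 0)
def zg2 : Z2 := Multiplicative.ofAdd (0, 1)
def zg3 : Z2 := Multiplicative.ofAdd (1, 1)

lemma rep_eq (ρ : Z2 →* SU2) (z : Z2) :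
    ρ z = ρ zg1 ^ (Multiplicative.toAdd z).1 * ρ zg2 ^ (Multiplicative.toAdd z).2 := by
  have hz : z = zg1 ^ (Multiplicative.toAdd z).1 * zg2 ^ (Multiplicative.toAdd z).2 := by
    apply Multiplicative.toAdd.injective
    simp only [toAdd_mul, toAdd_zpow, zg1, zg2, toAdd_ofAdd]
    ext <;> simp
  conv_lhs => rw [hz]
  rw [_root_.map_mul, map_zpow, map_zpow]

lemma pillRep_apply (p : ℝ × ℝ) (z : Z2) :
    pillRep p z = diagSU ((Multiplicative.toAdd z).1 * p.1 + (Multiplicative.toAdd z).2 * p.2) := by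
  show diagSU p.1 ^ (Multiplicative.toAdd z).1 * diagSU p.2 ^ (Multiplicative.toAdd z).2 = _
  rw [diagSU_zpow, diagSU_zpow, diagSU_mul]

lemma pillRep_zg1 (p : ℝ × ℝ) : pillRep p zg1 = diagSU p.1 := by
  rw [pillRep_apply]
  norm_num [zg1]

lemma pillRep_zg2 (p : ℝ × ℝ) : pillRep p zg2 = diagSU p.2 := by
  rw [pillRep_apply]
  norm_num [zg2]

lemma pillRep_zg3 (p : ℝ × ℝ) : pillRep p zg3 = diagSU (p.1 + p.2) := by
  rw [pillRep_apply]
  norm_num [zg3]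

/-! ### Periodicity and the flip -/

lemma exp_two_pi_shift (t : ℝ) (k : ℤ) :
    Complex.exp (((t + 2 * Real.pi * k : ℝ) : ℂ) * Complex.I) =
      Complex.exp ((t : ℂ) * Complex.I) := by
  have h : ((t + 2 * Real.pi * k : ℝ) : ℂ) * Complex.I =
      (t : ℂ) * Complex.I + k * (2 * (Real.pi : ℂ) * Complex.I) := by push_cast; ring
  rw [h, Complex.exp_add, Complex.exp_int_mul_two_pi_mul_I, mul_one]

lemma diagU_congr {s t : ℝ}
    (h : Complex.exp ((s : ℂ) * Complex.I) = Complex.exp ((t : ℂ) * Complex.I)) :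
    diagU s = diagU t := by
  unfold diagU
  refine congrArg Matrix.diagonal ?_
  funext i
  fin_cases i
  · exact h
  · show Complex.exp (-(s : ℂ) * Complex.I) = Complex.exp (-(t : ℂ) * Complex.I)
    rw [← star_exp_I, ← star_exp_I, h]

lemma diagSU_periodic (t : ℝ) (k : ℤ) : diagSU (t + 2 * Real.pi * k) = diagSU t :=
  Subtype.ext (diagU_congr (exp_two_pi_shift t k))

def Jsu : SU2 := ⟨!![0, 1; -1, 0], by
  apply mem_SU2
  · ext i j
    simp only [Matrix.star_eq_conjTranspose, Matrix.mul_apply, Fin.sum_univ_two,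
      Matrix.conjTranspose_apply]
    fin_cases i <;> fin_cases j <;> simp [Matrix.one_apply]
  · rw [Matrix.det_fin_two_of]; simp⟩

lemma J_conj (t : ℝ) : Jsu * diagSU t * Jsu⁻¹ = diagSU (-t) := by
  apply Subtype.ext
  show (Jsu : M2) * diagU t * star (Jsu : M2) = diagU (-t)
  ext i j
  rw [diagU, Matrix.mul_apply, Fin.sum_univ_two, Matrix.mul_diagonal, Matrix.mul_diagonal]
  fin_cases i <;> fin_cases j <;>
    · simp [Jsu, diagU, Matrix.star_eq_conjTranspose, Matrix.conjTranspose_apply,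
        Matrix.diagonal_apply]
      try push_cast
      try ring_nf

/-! ### Traces -/

lemma trace_diagSU (t : ℝ) :
    ((diagSU t : SU2) : M2).trace = ((2 * Real.cos t : ℝ) : ℂ) := by
  show (diagU t).trace = _
  rw [diagU, Matrix.trace_diagonal, Fin.sum_univ_two]
  show Complex.exp ((t : ℂ) * Complex.I) + Complex.exp (-(t : ℂ) * Complex.I) = _
  rw [Complex.exp_mul_I, Complex.exp_mul_I, Complex.cos_neg, Complex.sin_neg]
  push_cast [Complex.ofReal_cos]
  ring

lemma trace_conj_invariant {ρ σ : Z2 →* SU2} (h : (conjSetoid Z2).r ρ σ) (g : Z2) :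
    ((σ g : SU2) : M2).trace = ((ρ g : SU2) : M2).trace := by
  obtain ⟨u, hu⟩ := h
  rw [hu g, mul_coe, mul_coe, inv_coe, Matrix.trace_mul_cycle, star_mul_self_coe,
    Matrix.one_mul]

lemma cos_of_trace_eq {s t : ℝ}
    (h : ((diagSU s : SU2) : M2).trace = ((diagSU t : SU2) : M2).trace) :
    Real.cos s = Real.cos t := by
  rw [trace_diagSU, trace_diagSU] at h
  have := Complex.ofReal_injective h
  linarith

/-! ### The trigonometric classification -/

lemma pillow_rel_of_trig {x y x' y' : ℝ} (h1 : Real.cos x = Real.cos x')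
    (h2 : Real.cos y = Real.cos y')
    (h3 : Real.sin x * Real.sin y = Real.sin x' * Real.sin y') :
    ∃ m n : ℤ, (x' = x + 2 * Real.pi * m ∧ y' = y + 2 * Real.pi * n) ∨
      (x' = -x + 2 * Real.pi * m ∧ y' = -y + 2 * Real.pi * n) := by
  obtain ⟨k, hk⟩ := Real.cos_eq_cos_iff.mp h1
  obtain ⟨l, hl⟩ := Real.cos_eq_cos_iff.mp h2
  have sin_shift : ∀ (a : ℝ) (j : ℤ), Real.sin (2 * j * Real.pi + a) = Real.sin a := by
    intro a j
    rw [show 2 * (j : ℝ) * Real.pi + a = a + j * (2 * Real.pi) by ring,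
      Real.sin_add_int_mul_two_pi]
  rcases hk with hk | hk <;> rcases hl with hl | hl
  · exact ⟨k, l, Or.inl ⟨by rw [hk]; ring, by rw [hl]; ring⟩⟩
  · -- x' = 2kπ + x, y' = 2lπ - y
    have hsx : Real.sin x' = Real.sin x := by rw [hk, sin_shift]
    have hsy : Real.sin y' = -Real.sin y := by
      rw [hl, show 2 * (l : ℝ) * Real.pi - y = 2 * l * Real.pi + (-y) by ring, sin_shift,
        Real.sin_neg]
    rw [hsx, hsy] at h3
    have hzero : Real.sin x * Real.sin y = 0 := by linarith
    rcases mul_eq_zero.mp hzero with hz | hz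
    · obtain ⟨j, hj⟩ := Real.sin_eq_zero_iff.mp hz
      refine ⟨k + j, l, Or.inr ⟨?_, by rw [hl]; push_cast; ring⟩⟩
      rw [hk, ← hj]; push_cast; ring
    · obtain ⟨j, hj⟩ := Real.sin_eq_zero_iff.mp hz
      refine ⟨k, l - j, Or.inl ⟨by rw [hk]; ring, ?_⟩⟩
      rw [hl, ← hj]; push_cast; ring
  · -- x' = 2kπ - x, y' = 2lπ + y
    have hsx : Real.sin x' = -Real.sin x := by
      rw [hk, show 2 * (k : ℝ) * Real.pi - x = 2 * k * Real.pi + (-x) by ring, sin_shift,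
        Real.sin_neg]
    have hsy : Real.sin y' = Real.sin y := by rw [hl, sin_shift]
    rw [hsx, hsy] at h3
    have hzero : Real.sin x * Real.sin y = 0 := by linarith
    rcases mul_eq_zero.mp hzero with hz | hz
    · obtain ⟨j, hj⟩ := Real.sin_eq_zero_iff.mp hz
      refine ⟨k - j, l, Or.inl ⟨?_, by rw [hl]; ring⟩⟩
      rw [hk, ← hj]; push_cast; ring
    · obtain ⟨j, hj⟩ := Real.sin_eq_zero_iff.mp hz
      refine ⟨k, l + j, Or.inr ⟨by rw [hk]; ring, ?_⟩⟩
      rw [hl, ← hj]; push_cast; ring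
  · exact ⟨k, l, Or.inr ⟨by rw [hk]; ring, by rw [hl]; ring⟩⟩

lemma pillow_of_cos {p q : ℝ × ℝ} (h1 : Real.cos p.1 = Real.cos q.1)
    (h2 : Real.cos p.2 = Real.cos q.2)
    (h3 : Real.cos (p.1 + p.2) = Real.cos (q.1 + q.2)) :
    ∃ m n : ℤ, (q.1 = p.1 + 2 * Real.pi * m ∧ q.2 = p.2 + 2 * Real.pi * n) ∨
      (q.1 = -p.1 + 2 * Real.pi * m ∧ q.2 = -p.2 + 2 * Real.pi * n) := by
  apply pillow_rel_of_trig h1 h2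
  calc Real.sin p.1 * Real.sin p.2
      = Real.cos p.1 * Real.cos p.2 - Real.cos (p.1 + p.2) := by
        linarith [Real.cos_add p.1 p.2]
    _ = Real.cos q.1 * Real.cos q.2 - Real.cos (q.1 + q.2) := by rw [h1, h2, h3]
    _ = Real.sin q.1 * Real.sin q.2 := by linarith [Real.cos_add q.1 q.2]

/-! ### Conjugation relation vs pillowcase relation -/

lemma rel_pillRep_of_pillow {p q : ℝ × ℝ}
    (h : ∃ m n : ℤ, (q.1 = p.1 + 2 * Real.pi * m ∧ q.2 = p.2 + 2 * Real.pi * n) ∨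
      (q.1 = -p.1 + 2 * Real.pi * m ∧ q.2 = -p.2 + 2 * Real.pi * n)) :
    (conjSetoid Z2).r (pillRep p) (pillRep q) := by
  obtain ⟨m, n, h | h⟩ := h
  · refine ⟨1, fun g => ?_⟩
    rw [one_mul, inv_one, mul_one, pillRep_apply, pillRep_apply, h.1, h.2]
    set a : ℤ := (Multiplicative.toAdd g).1
    set b : ℤ := (Multiplicative.toAdd g).2
    have he : (a : ℝ) * (p.1 + 2 * Real.pi * m) + (b : ℝ) * (p.2 + 2 * Real.pi * n) =
        ((a : ℝ) * p.1 + (b : ℝ) * p.2) + 2 * Real.pi * ((a * m + b * n : ℤ) : ℝ) := by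
      push_cast; ring
    rw [he, diagSU_periodic]
  · refine ⟨Jsu, fun g => ?_⟩
    rw [pillRep_apply, pillRep_apply, h.1, h.2, J_conj]
    set a : ℤ := (Multiplicative.toAdd g).1
    set b : ℤ := (Multiplicative.toAdd g).2
    have he : (a : ℝ) * (-p.1 + 2 * Real.pi * m) + (b : ℝ) * (-p.2 + 2 * Real.pi * n) =
        (-((a : ℝ) * p.1 + (b : ℝ) * p.2)) + 2 * Real.pi * ((a * m + b * n : ℤ) : ℝ) := by
      push_cast; ring
    rw [he, diagSU_periodic]

lemma pillow_of_rel {p q : ℝ × ℝ} (h : (conjSetoid Z2).r (pillRep p) (pillRep q)) :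
    ∃ m n : ℤ, (q.1 = p.1 + 2 * Real.pi * m ∧ q.2 = p.2 + 2 * Real.pi * n) ∨
      (q.1 = -p.1 + 2 * Real.pi * m ∧ q.2 = -p.2 + 2 * Real.pi * n) := by
  have t1 := trace_conj_invariant h zg1
  have t2 := trace_conj_invariant h zg2
  have t3 := trace_conj_invariant h zg3
  rw [pillRep_zg1, pillRep_zg1] at t1
  rw [pillRep_zg2, pillRep_zg2] at t2
  rw [pillRep_zg3, pillRep_zg3] at t3
  exact pillow_of_cos (cos_of_trace_eq t1.symm) (cos_of_trace_eq t2.symm)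
    (cos_of_trace_eq t3.symm)

/-! ### Surjectivity -/

lemma pill_surj : Function.Surjective (fun p : ℝ × ℝ => charCl (pillRep p)) := by
  intro c
  obtain ⟨ρ, rfl⟩ := Quotient.exists_rep c
  have hUV : ρ zg1 * ρ zg2 = ρ zg2 * ρ zg1 := by
    rw [← _root_.map_mul, ← _root_.map_mul, mul_comm]
  obtain ⟨W, x, y, hU, hV⟩ := exists_conj_diag_pair _ _ hUV
  refine ⟨(x, y), Quotient.sound ⟨W, fun g => ?_⟩⟩
  have hconj : ∀ (D : SU2) (m : ℤ), (W * D * W⁻¹) ^ m = W * D ^ m * W⁻¹ := by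
    intro D m
    rw [← MulAut.conj_apply, ← map_zpow, MulAut.conj_apply]
  rw [rep_eq ρ g, hU, hV, hconj, hconj, pillRep_apply, diagSU_zpow, diagSU_zpow,
    ← diagSU_mul]
  group

/-! ### Continuity -/

lemma continuous_diagSU : Continuous diagSU := by
  apply Continuous.subtype_mk
  apply continuous_matrix
  intro i j
  by_cases hij : i = j
  · subst hij
    simp only [diagU, Matrix.diagonal_apply_eq]
    fin_cases i
    · show Continuous fun t : ℝ => Complex.exp ((t : ℂ) * Complex.I)
      fun_prop
    · show Continuous fun t : ℝ => Complex.exp (-(t : ℂ) * Complex.I)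
      fun_prop
  · simp only [diagU, Matrix.diagonal_apply_ne _ hij]
    exact continuous_const

lemma continuous_pillRep : Continuous pillRep := by
  apply continuous_induced_rng.mpr
  apply continuous_pi
  intro z
  show Continuous fun p : ℝ × ℝ => pillRep p z
  simp only [pillRep_apply]
  exact continuous_diagSU.comp (by fun_prop)

lemma continuous_pill : Continuous (fun p : ℝ × ℝ => charCl (pillRep p)) :=
  continuous_quotient_mk'.comp continuous_pillRep

/-! ### Compactness of the pillowcase -/

lemma reduce_mod (x : ℝ) : ∃ k : ℤ, x + 2 * Real.pi * k ∈ Set.Icc (0 : ℝ) (2 * Real.pi) := by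
  refine ⟨-⌊x / (2 * Real.pi)⌋, ?_⟩
  have hπ : (0 : ℝ) < 2 * Real.pi := by positivity
  set a : ℝ := x / (2 * Real.pi) with ha
  have hx : x = 2 * Real.pi * a := by rw [ha]; field_simp
  have h1 : 0 ≤ Int.fract a := Int.fract_nonneg a
  have h2 : Int.fract a < 1 := Int.fract_lt_one a
  have h3 : a - Int.fract a = (⌊a⌋ : ℝ) := Int.self_sub_fract a
  constructor
  · push_cast
    nlinarith
  · push_cast
    nlinarith

instance pillow_compact : CompactSpace (Quotient pillowSetoid) := by
  refine ⟨?_⟩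
  have huniv : (Set.univ : Set (Quotient pillowSetoid)) =
      Quotient.mk pillowSetoid ''
        (Set.Icc (0 : ℝ) (2 * Real.pi) ×ˢ Set.Icc (0 : ℝ) (2 * Real.pi)) := by
    refine Set.eq_of_subset_of_subset ?_ (Set.subset_univ _)
    rintro c -
    obtain ⟨p, rfl⟩ := Quotient.exists_rep c
    obtain ⟨m, hm⟩ := reduce_mod p.1
    obtain ⟨n, hn⟩ := reduce_mod p.2
    refine ⟨(p.1 + 2 * Real.pi * m, p.2 + 2 * Real.pi * n), ⟨hm, hn⟩, ?_⟩
    exact (Quotient.sound (show pillowSetoid.r p (p.1 + 2 * Real.pi * m, p.2 + 2 * Real.pi * n)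
      from ⟨m, n, Or.inl ⟨rfl, rfl⟩⟩)).symm
  rw [huniv]
  exact (isCompact_Icc.prod isCompact_Icc).image continuous_quotient_mk'

/-! ### Hausdorffness of the character variety -/

def traceF (ρ : Z2 →* SU2) : ℂ × ℂ × ℂ :=
  (((ρ zg1 : SU2) : M2).trace, ((ρ zg2 : SU2) : M2).trace, ((ρ zg3 : SU2) : M2).trace)

lemma traceF_sound : ∀ (ρ σ : Z2 →* SU2), (conjSetoid Z2).r ρ σ → traceF ρ = traceF σ := by
  intro ρ σ h
  unfold traceF
  rw [trace_conj_invariant h zg1, trace_conj_invariant h zg2, trace_conj_invariant h zg3]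

def traceCV : CharVar Z2 → ℂ × ℂ × ℂ := Quotient.lift traceF traceF_sound

lemma continuous_eval (g : Z2) : Continuous fun ρ : Z2 →* SU2 => ρ g :=
  (continuous_apply g).comp continuous_induced_dom

lemma continuous_trace_eval (g : Z2) :
    Continuous fun ρ : Z2 →* SU2 => ((ρ g : SU2) : M2).trace := by
  have h1 : Continuous fun ρ : Z2 →* SU2 => ((ρ g : SU2) : M2) :=
    continuous_subtype_val.comp (continuous_eval g)
  have h2 : Continuous fun A : M2 => A.trace := by
    show Continuous fun A : M2 => ∑ i, A.diag i
    refine continuous_finset_sum _ fun i _ => ?_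
    exact (continuous_apply i).comp (continuous_apply i)
  exact h2.comp h1

lemma continuous_traceF : Continuous traceF :=
  (continuous_trace_eval zg1).prodMk
    ((continuous_trace_eval zg2).prodMk (continuous_trace_eval zg3))

lemma continuous_traceCV : Continuous traceCV :=
  continuous_traceF.quotient_lift traceF_sound

lemma injective_traceCV : Function.Injective traceCV := by
  intro c c' h
  obtain ⟨p, rfl⟩ := pill_surj c
  obtain ⟨q, rfl⟩ := pill_surj c'
  have h1 : traceF (pillRep p) = traceF (pillRep q) := h
  unfold traceF at h1
  rw [pillRep_zg1, pillRep_zg1, pillRep_zg2, pillRep_zg2, pillRep_zg3, pillRep_zg3] at h1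
  obtain ⟨e1, e23⟩ := Prod.ext_iff.mp h1
  obtain ⟨e2, e3⟩ := Prod.ext_iff.mp e23
  exact Quotient.sound (rel_pillRep_of_pillow
    (pillow_of_cos (cos_of_trace_eq e1) (cos_of_trace_eq e2) (cos_of_trace_eq e3)))

instance charvar_t2 : T2Space (CharVar Z2) :=
  T2Space.of_injective_continuous injective_traceCV continuous_traceCV

end CS

namespace CS

/-! ### The sphere model -/

def sphV (p : ℝ × ℝ) : EuclideanSpace ℝ (Fin 3) :=
  (WithLp.equiv 2 (Fin 3 → ℝ)).symm
    ![Real.cos p.1, Real.cos p.2, Real.sin p.1 * Real.sin p.2]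

lemma sphV_ne_zero (p : ℝ × ℝ) : sphV p ≠ 0 := by
  intro h
  have e1 : Real.cos p.1 = 0 := congrFun (congrArg (WithLp.equiv 2 (Fin 3 → ℝ)) h) 0
  have e2 : Real.cos p.2 = 0 := congrFun (congrArg (WithLp.equiv 2 (Fin 3 → ℝ)) h) 1
  have e3 : Real.sin p.1 * Real.sin p.2 = 0 :=
    congrFun (congrArg (WithLp.equiv 2 (Fin 3 → ℝ)) h) 2
  have h1 := Real.sin_sq_add_cos_sq p.1
  have h2 := Real.sin_sq_add_cos_sq p.2
  rcases mul_eq_zero.mp e3 with hz | hz <;> nlinarith [hz, h1, h2, e1, e2]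

lemma norm_sphV_pos (p : ℝ × ℝ) : 0 < ‖sphV p‖ :=
  norm_pos_iff.mpr (sphV_ne_zero p)

def sphF (p : ℝ × ℝ) : Sphere2 :=
  ⟨‖sphV p‖⁻¹ • sphV p, by
    rw [mem_sphere_zero_iff_norm, norm_smul, norm_inv, norm_norm]
    field_simp [(norm_sphV_pos p).ne']⟩

lemma continuous_sphV : Continuous sphV := by
  apply (PiLp.continuous_toLp (p := 2) (β := fun _ : Fin 3 => ℝ)).comp
  apply continuous_pi
  intro i
  fin_cases i
  · show Continuous fun p : ℝ × ℝ => Real.cos p.1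
    fun_prop
  · show Continuous fun p : ℝ × ℝ => Real.cos p.2
    fun_prop
  · show Continuous fun p : ℝ × ℝ => Real.sin p.1 * Real.sin p.2
    fun_prop

lemma continuous_sphF : Continuous sphF := by
  apply Continuous.subtype_mk
  exact ((continuous_sphV.norm).inv₀ fun p => (norm_sphV_pos p).ne').smul continuous_sphV

lemma sphV_sound (p q : ℝ × ℝ) (h : pillowSetoid.r p q) : sphV p = sphV q := by
  have hcos : ∀ (t : ℝ) (k : ℤ), Real.cos (t + 2 * Real.pi * k) = Real.cos t := by
    intro t k
    rw [show t + 2 * Real.pi * k = t + k * (2 * Real.pi) by ring, Real.cos_add_int_mul_two_pi]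
  have hsin : ∀ (t : ℝ) (k : ℤ), Real.sin (t + 2 * Real.pi * k) = Real.sin t := by
    intro t k
    rw [show t + 2 * Real.pi * k = t + k * (2 * Real.pi) by ring, Real.sin_add_int_mul_two_pi]
  obtain ⟨m, n, ⟨h1, h2⟩ | ⟨h1, h2⟩⟩ := h
  · unfold sphV
    congr 1
    funext i
    fin_cases i
    · show Real.cos p.1 = Real.cos q.1
      rw [h1, hcos]
    · show Real.cos p.2 = Real.cos q.2
      rw [h2, hcos]
    · show Real.sin p.1 * Real.sin p.2 = Real.sin q.1 * Real.sin q.2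
      rw [h1, h2, hsin, hsin]
  · unfold sphV
    congr 1
    funext i
    fin_cases i
    · show Real.cos p.1 = Real.cos q.1
      rw [h1, hcos, Real.cos_neg]
    · show Real.cos p.2 = Real.cos q.2
      rw [h2, hcos, Real.cos_neg]
    · show Real.sin p.1 * Real.sin p.2 = Real.sin q.1 * Real.sin q.2
      rw [h1, h2, hsin, hsin, Real.sin_neg, Real.sin_neg]
      ring

lemma sphF_sound (p q : ℝ × ℝ) (h : pillowSetoid.r p q) : sphF p = sphF q := by
  apply Subtype.ext
  show ‖sphV p‖⁻¹ • sphV p = ‖sphV q‖⁻¹ • sphV q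
  rw [sphV_sound p q h]

lemma cos_sq_le_one (t : ℝ) : Real.cos t ^ 2 ≤ 1 := by
  nlinarith [Real.sin_sq_add_cos_sq t, sq_nonneg (Real.sin t)]

lemma surface_eq (p : ℝ × ℝ) :
    (Real.sin p.1 * Real.sin p.2) ^ 2 =
      (1 - Real.cos p.1 ^ 2) * (1 - Real.cos p.2 ^ 2) := by
  have h1 := Real.sin_sq_add_cos_sq p.1
  have h2 := Real.sin_sq_add_cos_sq p.2
  nlinarith [h1, h2]

lemma sphV_c0 (p : ℝ × ℝ) : sphV p 0 = Real.cos p.1 := rfl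
lemma sphV_c1 (p : ℝ × ℝ) : sphV p 1 = Real.cos p.2 := rfl
lemma sphV_c2 (p : ℝ × ℝ) : sphV p 2 = Real.sin p.1 * Real.sin p.2 := rfl

set_option maxHeartbeats 2000000 in
lemma sphF_inj {p q : ℝ × ℝ} (h : sphF p = sphF q) :
    ∃ m n : ℤ, (q.1 = p.1 + 2 * Real.pi * m ∧ q.2 = p.2 + 2 * Real.pi * n) ∨
      (q.1 = -p.1 + 2 * Real.pi * m ∧ q.2 = -p.2 + 2 * Real.pi * n) := by
  have hv : ‖sphV p‖⁻¹ • sphV p = ‖sphV q‖⁻¹ • sphV q := Subtype.ext_iff.mp h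
  have hcomp : ∀ i : Fin 3, ‖sphV p‖⁻¹ * sphV p i = ‖sphV q‖⁻¹ * sphV q i := by
    intro i
    have h' : (‖sphV p‖⁻¹ • sphV p) i = (‖sphV q‖⁻¹ • sphV q) i := by rw [hv]
    rwa [PiLp.smul_apply, PiLp.smul_apply, smul_eq_mul, smul_eq_mul] at h'
  have hgen : ∃ μ : ℝ, 0 < μ ∧ Real.cos q.1 = μ * Real.cos p.1 ∧
      Real.cos q.2 = μ * Real.cos p.2 ∧
      Real.sin q.1 * Real.sin q.2 = μ * (Real.sin p.1 * Real.sin p.2) := by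
    refine ⟨‖sphV q‖ / ‖sphV p‖, div_pos (norm_sphV_pos q) (norm_sphV_pos p), ?_, ?_, ?_⟩
    · have hc := hcomp 0
      rw [sphV_c0, sphV_c0] at hc
      field_simp [(norm_sphV_pos p).ne', (norm_sphV_pos q).ne'] at hc ⊢
      first
      | linear_combination hc
      | linear_combination -hc
    · have hc := hcomp 1
      rw [sphV_c1, sphV_c1] at hc
      field_simp [(norm_sphV_pos p).ne', (norm_sphV_pos q).ne'] at hc ⊢
      first
      | linear_combination hc
      | linear_combination -hc
    · have hc := hcomp 2
      rw [sphV_c2, sphV_c2] at hc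
      field_simp [(norm_sphV_pos p).ne', (norm_sphV_pos q).ne'] at hc ⊢
      first
      | linear_combination hc
      | linear_combination -hc
  obtain ⟨μ, hμpos, ha', hb', hc'⟩ := hgen
  have E1 := surface_eq p
  have E2' := surface_eq q
  rw [ha', hb', hc'] at E2'
  have hfact : (μ ^ 2 - 1) * (μ ^ 2 * Real.cos p.1 ^ 2 * Real.cos p.2 ^ 2 - 1) = 0 := by
    linear_combination μ ^ 2 * E1 - E2'
  have ha1 := cos_sq_le_one p.1
  have hb1 := cos_sq_le_one p.2
  have ha'1 : μ ^ 2 * Real.cos p.1 ^ 2 ≤ 1 := by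
    have h2 := cos_sq_le_one q.1
    rw [ha'] at h2
    nlinarith [h2]
  have hb'1 : μ ^ 2 * Real.cos p.2 ^ 2 ≤ 1 := by
    have h2 := cos_sq_le_one q.2
    rw [hb'] at h2
    nlinarith [h2]
  have hs1 : μ ^ 2 = 1 := by
    rcases mul_eq_zero.mp hfact with h0 | h0
    · linarith
    · nlinarith [h0, ha1, hb1, ha'1, hb'1, hμpos]
  have hμ1 : μ = 1 := by nlinarith [hμpos, hs1]
  rw [hμ1, one_mul] at ha' hb' hc'
  exact pillow_rel_of_trig ha'.symm hb'.symm hc'.symm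

lemma exists_cos_sin {u v : ℝ} (h : u ^ 2 + v ^ 2 = 1) :
    ∃ θ : ℝ, Real.cos θ = u ∧ Real.sin θ = v := by
  set z : ℂ := (u : ℂ) + (v : ℂ) * Complex.I with hz
  have habs : ‖z‖ = 1 := by
    rw [hz, Complex.norm_def, Complex.normSq_add_mul_I, h, Real.sqrt_one]
  have hne : z ≠ 0 := by
    intro h0
    rw [h0, norm_zero] at habs
    norm_num at habs
  have hre : z.re = u := by rw [hz]; simp
  have him : z.im = v := by rw [hz]; simp
  refine ⟨Complex.arg z, ?_, ?_⟩
  · rw [Complex.cos_arg hne, habs, div_one, hre]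
  · rw [Complex.sin_arg, habs, div_one, him]

lemma sphF_eq_of_smul {p : ℝ × ℝ} {w : EuclideanSpace ℝ (Fin 3)} (hw : ‖w‖ = 1) {t : ℝ}
    (ht : 0 < t) (hvp : sphV p = t • w) (hmem : w ∈ Metric.sphere (0 : EuclideanSpace ℝ (Fin 3)) 1) :
    sphF p = ⟨w, hmem⟩ := by
  apply Subtype.ext
  show ‖sphV p‖⁻¹ • sphV p = w
  rw [hvp, norm_smul, hw, mul_one, Real.norm_eq_abs, abs_of_pos ht, smul_smul,
    inv_mul_cancel₀ ht.ne', one_smul]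

set_option maxHeartbeats 2000000 in
lemma sphF_surj : Function.Surjective sphF := by
  rintro ⟨w, hw⟩
  have hw1 : ‖w‖ = 1 := mem_sphere_zero_iff_norm.mp hw
  set a : ℝ := w 0 with hadef
  set b : ℝ := w 1 with hbdef
  set c : ℝ := w 2 with hcdef
  have habc : a ^ 2 + b ^ 2 + c ^ 2 = 1 := by
    have h1 := congrArg (· ^ 2) hw1
    rw [EuclideanSpace.norm_eq] at h1
    simp only [one_pow] at h1
    rw [Real.sq_sqrt (by positivity)] at h1
    simpa [Fin.sum_univ_three, Real.norm_eq_abs, sq_abs, hadef, hbdef, hcdef] using h1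
  have hmk : ∀ t : ℝ, 0 < t → ∀ x y : ℝ, Real.cos x = t * a → Real.cos y = t * b →
      Real.sin x * Real.sin y = t * c → sphF (x, y) = ⟨w, hw⟩ := by
    intro t ht x y h1 h2 h3
    have hvp : sphV (x, y) = t • w := by
      apply PiLp.ext
      intro i
      rw [PiLp.smul_apply, smul_eq_mul]
      fin_cases i
      · exact h1
      · exact h2
      · exact h3
    exact sphF_eq_of_smul hw1 ht hvp hw
  by_cases hab : a = 0 ∧ b = 0
  · have hc2 : c ^ 2 = 1 := by nlinarith [habc, hab.1, hab.2]
    rcases mul_eq_zero.mp (show (c - 1) * (c + 1) = 0 by nlinarith) with h0 | h0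
    · have hc : c = 1 := by linarith
      refine ⟨(Real.pi / 2, Real.pi / 2), hmk 1 one_pos _ _ ?_ ?_ ?_⟩
      · rw [Real.cos_pi_div_two, hab.1]; try ring
      · rw [Real.cos_pi_div_two, hab.2]; try ring
      · rw [Real.sin_pi_div_two, hc]; try ring
    · have hc : c = -1 := by linarith
      refine ⟨(Real.pi / 2, -(Real.pi / 2)), hmk 1 one_pos _ _ ?_ ?_ ?_⟩
      · rw [Real.cos_pi_div_two, hab.1]; try ring
      · rw [Real.cos_neg, Real.cos_pi_div_two, hab.2]; try ring
      · rw [Real.sin_neg, Real.sin_pi_div_two, hc]; try ring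
  · set M : ℝ := max |a| |b| with hM
    have hMpos : 0 < M := by
      rcases not_and_or.mp hab with h0 | h0
      · exact lt_of_lt_of_le (abs_pos.mpr h0) (le_max_left _ _)
      · exact lt_of_lt_of_le (abs_pos.mpr h0) (le_max_right _ _)
    set φ : ℝ → ℝ := fun t => (1 - t ^ 2 * a ^ 2) * (1 - t ^ 2 * b ^ 2) - t ^ 2 * c ^ 2
      with hφ
    have hφc : Continuous φ := by rw [hφ]; fun_prop
    have hφ0 : φ 0 = 1 := by rw [hφ]; norm_num
    have hφM : φ (1 / M) ≤ 0 := by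
      have hone : (1 - (1 / M) ^ 2 * a ^ 2) * (1 - (1 / M) ^ 2 * b ^ 2) = 0 := by
        rcases max_choice |a| |b| with h0 | h0
        · have hMa : M ^ 2 = a ^ 2 := by rw [hM, h0, sq_abs]
          have h1 : (1 / M) ^ 2 * a ^ 2 = 1 := by
            rw [← hMa]; field_simp
          rw [h1]; ring
        · have hMb : M ^ 2 = b ^ 2 := by rw [hM, h0, sq_abs]
          have h1 : (1 / M) ^ 2 * b ^ 2 = 1 := by
            rw [← hMb]; field_simp
          rw [h1]; ring
      show (1 - (1 / M) ^ 2 * a ^ 2) * (1 - (1 / M) ^ 2 * b ^ 2) - (1 / M) ^ 2 * c ^ 2 ≤ 0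
      rw [hone]
      nlinarith [sq_nonneg ((1 / M) * c)]
    have hIVT : (0 : ℝ) ∈ φ '' Set.Icc 0 (1 / M) := by
      apply intermediate_value_Icc' (by positivity) hφc.continuousOn
      exact ⟨hφM, by rw [hφ0]; norm_num⟩
    obtain ⟨t, htmem, htphi⟩ := hIVT
    obtain ⟨ht0, htM⟩ := htmem
    have htpos : 0 < t := by
      rcases lt_or_eq_of_le ht0 with h0 | h0
      · exact h0
      · exfalso; rw [← h0, hφ0] at htphi; norm_num at htphi
    have hMt : t * M ≤ 1 := by
      have := (le_div_iff₀ hMpos).mp htM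
      linarith
    have htaM : t * |a| ≤ 1 :=
      le_trans (by nlinarith [le_max_left |a| |b|, htpos.le]) hMt
    have htbM : t * |b| ≤ 1 :=
      le_trans (by nlinarith [le_max_right |a| |b|, htpos.le]) hMt
    have hta2 : t ^ 2 * a ^ 2 ≤ 1 := by
      nlinarith [htaM, mul_nonneg htpos.le (abs_nonneg a), sq_abs a]
    have htb2 : t ^ 2 * b ^ 2 ≤ 1 := by
      nlinarith [htbM, mul_nonneg htpos.le (abs_nonneg b), sq_abs b]
    have htaabs : -1 ≤ t * a ∧ t * a ≤ 1 := by
      constructor <;> nlinarith [hta2]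
    have htbabs : -1 ≤ t * b ∧ t * b ≤ 1 := by
      constructor <;> nlinarith [htb2]
    have hφt : (1 - t ^ 2 * a ^ 2) * (1 - t ^ 2 * b ^ 2) - t ^ 2 * c ^ 2 = 0 := htphi
    set x : ℝ := Real.arccos (t * a) with hx
    have hcx : Real.cos x = t * a := Real.cos_arccos htaabs.1 htaabs.2
    have hsx : Real.sin x = Real.sqrt (1 - (t * a) ^ 2) := Real.sin_arccos (t * a)
    by_cases hdeg : 1 - t ^ 2 * a ^ 2 = 0
    · have hc0 : c = 0 := by
        rw [hdeg] at hφt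
        have h1 : t ^ 2 * c ^ 2 = 0 := by linarith
        rcases mul_eq_zero.mp h1 with h0 | h0
        · exfalso; nlinarith [htpos]
        · nlinarith [h0, sq_nonneg c]
      set y : ℝ := Real.arccos (t * b) with hy
      have hcy : Real.cos y = t * b := Real.cos_arccos htbabs.1 htbabs.2
      have hsx0 : Real.sin x = 0 := by
        rw [hsx, show 1 - (t * a) ^ 2 = 1 - t ^ 2 * a ^ 2 by ring, hdeg, Real.sqrt_zero]
      refine ⟨(x, y), hmk t htpos x y hcx hcy ?_⟩
      rw [hsx0, hc0]; ring
    · have hdpos : 0 < 1 - t ^ 2 * a ^ 2 := by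
        rcases lt_or_eq_of_le hta2 with h0 | h0
        · linarith
        · exact absurd (by linarith) hdeg
      set sx : ℝ := Real.sqrt (1 - t ^ 2 * a ^ 2) with hsxd
      have hsxpos : 0 < sx := Real.sqrt_pos.mpr hdpos
      have hsx2 : sx ^ 2 = 1 - t ^ 2 * a ^ 2 := Real.sq_sqrt hdpos.le
      have hsum : (t * b) ^ 2 + (t * c / sx) ^ 2 = 1 := by
        field_simp [hsxpos.ne']
        first
        | linear_combination ((t * b) ^ 2 - 1) * hsx2 - hφt
        | linear_combination (1 - (t * b) ^ 2) * hsx2 + hφt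
        | linear_combination ((t * b) ^ 2 - 1) * hsx2 + hφt
        | linear_combination (1 - (t * b) ^ 2) * hsx2 - hφt
      obtain ⟨y, hcy, hsy⟩ := exists_cos_sin hsum
      refine ⟨(x, y), hmk t htpos x y hcx hcy ?_⟩
      have hsx' : Real.sin x = sx := by
        rw [hsx, hsxd, show 1 - (t * a) ^ 2 = 1 - t ^ 2 * a ^ 2 by ring]
      rw [hsx', hsy]
      field_simp

end CS

open CS in
/-- The pillowcase: the map `ℝ² → χ(ℤ²)`, `(x,y) ↦ [diag reps]`, is continuous
and surjective, induces a homeomorphism from the quotient of the torus `ℝ²/(2πℤ)²` by the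
involution `(x,y) ↦ (-x,-y)` onto `χ(ℤ²)`, and `χ(ℤ²)` is homeomorphic to the 2-sphere. -/
theorem pillowcase :
    Continuous (fun p : ℝ × ℝ => charCl (pillRep p)) ∧
    Function.Surjective (fun p : ℝ × ℝ => charCl (pillRep p)) ∧
    (∃ e : Quotient pillowSetoid ≃ₜ CharVar Z2,
      ∀ p : ℝ × ℝ, e (Quotient.mk pillowSetoid p) = charCl (pillRep p)) ∧
    Nonempty (CharVar Z2 ≃ₜ Sphere2) := by
  -- the induced map on the quotient
  have hsound : ∀ p q : ℝ × ℝ, pillowSetoid.r p q → charCl (pillRep p) = charCl (pillRep q) :=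
    fun p q hpq => Quotient.sound (rel_pillRep_of_pillow hpq)
  let e0 : Quotient pillowSetoid → CharVar Z2 :=
    Quotient.lift (fun p : ℝ × ℝ => charCl (pillRep p)) hsound
  have he0inj : Function.Injective e0 := by
    intro c c'
    induction c using Quotient.ind
    induction c' using Quotient.ind
    intro hcc
    exact Quotient.sound (pillow_of_rel (Quotient.exact hcc))
  have he0surj : Function.Surjective e0 := by
    intro c
    obtain ⟨p, hp⟩ := pill_surj c
    exact ⟨Quotient.mk pillowSetoid p, hp⟩
  have he0cont : Continuous e0 := continuous_pill.quotient_lift hsound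
  let eq0 : Quotient pillowSetoid ≃ CharVar Z2 := Equiv.ofBijective e0 ⟨he0inj, he0surj⟩
  have heq0cont : Continuous eq0 := he0cont
  let E : Quotient pillowSetoid ≃ₜ CharVar Z2 := heq0cont.homeoOfEquivCompactToT2
  -- the sphere homeomorphism
  let f0 : Quotient pillowSetoid → Sphere2 := Quotient.lift sphF sphF_sound
  have hf0inj : Function.Injective f0 := by
    intro c c'
    induction c using Quotient.ind
    induction c' using Quotient.ind
    intro hcc
    exact Quotient.sound (sphF_inj hcc)
  have hf0surj : Function.Surjective f0 := by
    intro d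
    obtain ⟨p, hp⟩ := sphF_surj d
    exact ⟨Quotient.mk pillowSetoid p, hp⟩
  have hf0cont : Continuous f0 := continuous_sphF.quotient_lift sphF_sound
  let fq0 : Quotient pillowSetoid ≃ Sphere2 := Equiv.ofBijective f0 ⟨hf0inj, hf0surj⟩
  have hfq0cont : Continuous fq0 := hf0cont
  let F : Quotient pillowSetoid ≃ₜ Sphere2 := hfq0cont.homeoOfEquivCompactToT2
  exact ⟨continuous_pill, pill_surj, ⟨E, fun p => rfl⟩, ⟨E.symm.trans F⟩⟩
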